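/- Let S, t ∈ ℝ with 0 ≤ t ≤ S ≤ 1. Then S/(2(2−S)) + (3−2t)·t/(2(2−t)) ≤ S. -/
import Mathlib

/-- for `0 ≤ t ≤ S ≤ 1`, `S/(2(2−S)) + (3−2t)·t/(2(2−t)) ≤ S`. -/
theorem negative_edge_charging (S t : ℝ) (ht0 : 0 ≤ t) (htS : t ≤ S) (hS1 : S ≤ 1) :
    S / (2 * (2 - S)) + (3 - 2 * t) * t / (2 * (2 - t)) ≤ S := by
  have hS : (0:ℝ) < 2 * (2 - S) := by nlinarith
  have ht : (0:ℝ) < 2 * (2 - t) := by nlinarith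
  rw [div_add_div _ _ (ne_of_gt hS) (ne_of_gt ht), div_le_iff₀ (by positivity)]
  nlinarith [mul_nonneg ht0 (sub_nonneg.2 htS), sq_nonneg (S - t), mul_nonneg (mul_nonneg ht0 ht0) (sub_nonneg.2 htS), sq_nonneg (S*t - t)]
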